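/- Let (S, d) be a metric space equipped with a finite Borel measure μ. Let J₁,…,J_M ⊆ S be pairwise disjoint measurable sets with μ(J_k) > 0 for each k, let J₀ = S \ (J₁ ∪ … ∪ J_M), and set Δ = μ(J₀)^{1/2} + max_{k=1,…,M} diam(J_k). Define the piecewise-averaging operator (P g)(x) = Σ_{k=1}^M 1_{J_k}(x) · (1/μ(J_k)) ∫_{J_k} g dμ. Suppose g : S → ℝ is measurable and C ≥ 0 satisfies |g(x)| ≤ C for all x ∈ S and |g(x) − g(y)| ≤ C·d(x,y) for all x, y ∈ S. Then (∫_S (g − P g)² dμ)^{1/2} ≤ (1 + μ(S))^{1/2} · C · Δ. -/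

import Mathlib

open MeasureTheory
open scoped ENNReal

/-- Lemma 3.2(i): if `g` is bounded by `C` and `C`-Lipschitz on a finite metric measure
space `(S, d, μ)`, and `P g` is the piecewise average of `g` over pairwise disjoint sets
`J₁,…,J_M` of positive measure, then
`‖g - P g‖_{L²(μ)} ≤ (1 + μ(S))^{1/2} · C · Δ`, where
`Δ = μ(S \ ⋃ J_k)^{1/2} + sup_k diam(J_k)`. -/
theorem stmt1 {S : Type*} [MetricSpace S] [MeasurableSpace S] [BorelSpace S]
    (μ : Measure S) [IsFiniteMeasure μ] (M : ℕ) (J : Fin M → Set S)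
    (hJmeas : ∀ k, MeasurableSet (J k))
    (hJdisj : Pairwise (Function.onFun Disjoint J))
    (hJpos : ∀ k, 0 < μ (J k))
    (g : S → ℝ) (hgmeas : Measurable g)
    (C : ℝ) (hC : 0 ≤ C)
    (hbd : ∀ x, |g x| ≤ C)
    (hlip : ∀ x y, |g x - g y| ≤ C * dist x y)
    (Pg : S → ℝ)
    (hPg : ∀ x, Pg x =
      ∑ k : Fin M, (J k).indicator
        (fun _ => (μ (J k)).toReal⁻¹ * ∫ y in J k, g y ∂μ) x)
    (Δ : ℝ≥0∞)
    (hΔ : Δ = (μ (Set.univ \ ⋃ k, J k)) ^ (1 / 2 : ℝ) + ⨆ k, EMetric.diam (J k)) :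
    (∫⁻ x, ENNReal.ofReal ((g x - Pg x) ^ 2) ∂μ) ^ (1 / 2 : ℝ) ≤
      (1 + μ Set.univ) ^ (1 / 2 : ℝ) * ENNReal.ofReal C * Δ := by
  -- Case C = 0 : g ≡ 0 and Pg ≡ 0
  rcases eq_or_lt_of_le hC with hC0 | hCpos
  · have hg0 : ∀ x, g x = 0 := fun x => abs_nonpos_iff.mp (by rw [hC0]; exact hbd x)
    have hPg0 : ∀ x, Pg x = 0 := by
      intro x
      rw [hPg]
      refine Finset.sum_eq_zero fun k _ => ?_
      have : (∫ y in J k, g y ∂μ) = 0 := by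
        simp [funext hg0]
      simp [Set.indicator_apply, this]
    have : (∫⁻ x, ENNReal.ofReal ((g x - Pg x) ^ 2) ∂μ) = 0 := by
      simp [hg0, hPg0]
    rw [this, ENNReal.zero_rpow_of_pos (by norm_num)]
    exact zero_le
  set c : ℝ≥0∞ := ENNReal.ofReal C with hc
  have hcne : c ≠ 0 := by
    simp [hc, ENNReal.ofReal_eq_zero, not_le, hCpos]
  set D : ℝ≥0∞ := ⨆ k, EMetric.diam (J k) with hD
  set A : Set S := ⋃ k, J k with hA
  have hAmeas : MeasurableSet A := MeasurableSet.iUnion fun k => hJmeas k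
  have hμU : (1 + μ Set.univ) ≠ ∞ := by
    simp [ENNReal.add_ne_top, measure_ne_top]
  -- Case D = ∞ : RHS is ∞
  rcases eq_or_ne D ∞ with hDtop | hDfin
  · have hΔtop : Δ = ∞ := by rw [hΔ, hDtop]; exact add_top _
    have h1 : (1 + μ Set.univ) ^ (1 / 2 : ℝ) ≠ 0 := by
      refine (ENNReal.rpow_pos ?_ hμU).ne'
      exact lt_of_lt_of_le zero_lt_one le_self_add
    rw [hΔtop, ENNReal.mul_top (mul_ne_zero h1 hcne)]
    exact le_top
  -- Main case.
  have hdiam_fin : ∀ k, EMetric.diam (J k) ≠ ∞ :=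
    fun k => ne_top_of_le_ne_top hDfin (le_iSup (fun k => EMetric.diam (J k)) k)
  -- pointwise bound on A
  have hptA : ∀ x ∈ A, ENNReal.ofReal ((g x - Pg x) ^ 2) ≤ c ^ 2 * D ^ 2 := by
    intro x hx
    rw [hA, Set.mem_iUnion] at hx
    obtain ⟨k, hxk⟩ := hx
    have hμk : μ (J k) ≠ ∞ := measure_ne_top μ _
    have hμkR : 0 < (μ (J k)).toReal := ENNReal.toReal_pos (hJpos k).ne' hμk
    set dk : ℝ := (EMetric.diam (J k)).toReal with hdk
    have hdknn : 0 ≤ dk := ENNReal.toReal_nonneg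
    -- Pg x is the average over J k
    have hPgx : Pg x = (μ (J k)).toReal⁻¹ * ∫ y in J k, g y ∂μ := by
      rw [hPg, Finset.sum_eq_single k]
      · rw [Set.indicator_of_mem hxk]
      · intro j _ hjk
        rw [Set.indicator_of_notMem]
        exact fun hxj => (Set.disjoint_left.mp (hJdisj hjk) hxj) hxk
      · simp
    -- rewrite g x - Pg x as an average of differences
    have hgint : IntegrableOn g (J k) μ := by
      refine ⟨hgmeas.aestronglyMeasurable, HasFiniteIntegral.of_bounded (C := C) ?_⟩
      exact Filter.Eventually.of_forall fun y => hbd y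
    have hconst : IntegrableOn (fun _ : S => g x) (J k) μ := integrableOn_const hμk
    have hkey : g x - Pg x = (μ (J k)).toReal⁻¹ * ∫ y in J k, (g x - g y) ∂μ := by
      rw [integral_sub hconst hgint, setIntegral_const, smul_eq_mul, measureReal_def, hPgx]
      field_simp
    -- bound the integral
    have hbound : ∀ y ∈ J k, ‖g x - g y‖ ≤ C * dk := by
      intro y hy
      refine le_trans (hlip x y) (mul_le_mul_of_nonneg_left ?_ hC)
      have h1 : edist x y ≤ EMetric.diam (J k) := EMetric.edist_le_diam_of_mem hxk hy
      have := ENNReal.toReal_mono (hdiam_fin k) h1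
      simpa [dist_edist] using this
    have hnorm : |∫ y in J k, (g x - g y) ∂μ| ≤ C * dk * (μ (J k)).toReal := by
      have := norm_setIntegral_le_of_norm_le_const (μ := μ) (s := J k)
        (f := fun y => g x - g y) hμk.lt_top hbound
      simpa [measureReal_def] using this
    have habs : |g x - Pg x| ≤ C * dk := by
      rw [hkey, abs_mul, abs_of_nonneg (inv_nonneg.mpr hμkR.le)]
      calc (μ (J k)).toReal⁻¹ * |∫ y in J k, (g x - g y) ∂μ|
          ≤ (μ (J k)).toReal⁻¹ * (C * dk * (μ (J k)).toReal) :=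
            mul_le_mul_of_nonneg_left hnorm (inv_nonneg.mpr hμkR.le)
        _ = C * dk := by field_simp
    have hsq : (g x - Pg x) ^ 2 ≤ (C * dk) ^ 2 := by
      rw [← sq_abs]
      exact pow_le_pow_left₀ (abs_nonneg _) habs 2
    calc ENNReal.ofReal ((g x - Pg x) ^ 2)
        ≤ ENNReal.ofReal ((C * dk) ^ 2) := ENNReal.ofReal_le_ofReal hsq
      _ = (ENNReal.ofReal C * ENNReal.ofReal dk) ^ 2 := by
          rw [ENNReal.ofReal_pow (mul_nonneg hC hdknn), ENNReal.ofReal_mul hC]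
      _ ≤ (c * D) ^ 2 := by
          refine pow_le_pow_left' (mul_le_mul' le_rfl ?_) 2
          exact le_trans ENNReal.ofReal_toReal_le (le_iSup (fun k => EMetric.diam (J k)) k)
      _ = c ^ 2 * D ^ 2 := mul_pow c D 2
  -- pointwise bound on Aᶜ
  have hptAc : ∀ x ∈ Aᶜ, ENNReal.ofReal ((g x - Pg x) ^ 2) ≤ c ^ 2 := by
    intro x hx
    have hPg0 : Pg x = 0 := by
      rw [hPg]
      refine Finset.sum_eq_zero fun k _ => ?_
      rw [Set.indicator_of_notMem]
      exact fun hxk => hx (Set.mem_iUnion.mpr ⟨k, hxk⟩)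
    rw [hPg0, sub_zero, ← sq_abs, ← ENNReal.ofReal_pow hC]
    exact ENNReal.ofReal_le_ofReal (pow_le_pow_left₀ (abs_nonneg _) (hbd x) 2)
  -- total integral bound
  set μ0 : ℝ≥0∞ := μ (Set.univ \ A) with hμ0
  have hμ0c : μ Aᶜ = μ0 := by rw [hμ0, ← Set.compl_eq_univ_diff]
  have hint : (∫⁻ x, ENNReal.ofReal ((g x - Pg x) ^ 2) ∂μ) ≤
      c ^ 2 * μ0 + c ^ 2 * D ^ 2 * μ Set.univ := by
    rw [← lintegral_add_compl (fun x => ENNReal.ofReal ((g x - Pg x) ^ 2)) hAmeas]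
    have h1 : (∫⁻ x in A, ENNReal.ofReal ((g x - Pg x) ^ 2) ∂μ) ≤ c ^ 2 * D ^ 2 * μ Set.univ := by
      calc (∫⁻ x in A, ENNReal.ofReal ((g x - Pg x) ^ 2) ∂μ)
          ≤ ∫⁻ _ in A, c ^ 2 * D ^ 2 ∂μ := setLIntegral_mono measurable_const hptA
        _ = c ^ 2 * D ^ 2 * μ A := setLIntegral_const A _
        _ ≤ c ^ 2 * D ^ 2 * μ Set.univ := mul_le_mul' le_rfl (measure_mono (Set.subset_univ A))
    have h2 : (∫⁻ x in Aᶜ, ENNReal.ofReal ((g x - Pg x) ^ 2) ∂μ) ≤ c ^ 2 * μ0 := by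
      calc (∫⁻ x in Aᶜ, ENNReal.ofReal ((g x - Pg x) ^ 2) ∂μ)
          ≤ ∫⁻ _ in Aᶜ, c ^ 2 ∂μ := setLIntegral_mono measurable_const hptAc
        _ = c ^ 2 * μ Aᶜ := setLIntegral_const Aᶜ _
        _ = c ^ 2 * μ0 := by rw [hμ0c]
    calc (∫⁻ x in A, ENNReal.ofReal ((g x - Pg x) ^ 2) ∂μ) +
          ∫⁻ x in Aᶜ, ENNReal.ofReal ((g x - Pg x) ^ 2) ∂μ
        ≤ c ^ 2 * D ^ 2 * μ Set.univ + c ^ 2 * μ0 := add_le_add h1 h2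
      _ = c ^ 2 * μ0 + c ^ 2 * D ^ 2 * μ Set.univ := add_comm _ _
  -- RHS squared dominates the integral
  set R : ℝ≥0∞ := (1 + μ Set.univ) ^ (1 / 2 : ℝ) * c * Δ with hR
  have hRsq : c ^ 2 * μ0 + c ^ 2 * D ^ 2 * μ Set.univ ≤ R ^ 2 := by
    have hΔsq : μ0 + D ^ 2 ≤ Δ ^ 2 := by
      have h1 : (μ0 ^ (1 / 2 : ℝ)) ^ 2 = μ0 := by
        rw [← ENNReal.rpow_natCast (μ0 ^ (1 / 2 : ℝ)) 2, ← ENNReal.rpow_mul]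
        norm_num
      have h2 : Δ = μ0 ^ (1 / 2 : ℝ) + D := by rw [hΔ]
      calc μ0 + D ^ 2 = (μ0 ^ (1 / 2 : ℝ)) ^ 2 + D ^ 2 := by rw [h1]
        _ ≤ (μ0 ^ (1 / 2 : ℝ) + D) ^ 2 := by
            rw [sq, sq, sq, add_mul, mul_add, mul_add]
            calc μ0 ^ (1 / 2 : ℝ) * μ0 ^ (1 / 2 : ℝ) + D * D
                ≤ (μ0 ^ (1 / 2 : ℝ) * μ0 ^ (1 / 2 : ℝ) + μ0 ^ (1 / 2 : ℝ) * D) +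
                  (D * μ0 ^ (1 / 2 : ℝ) + D * D) := by
                  exact add_le_add le_self_add le_add_self
              _ = _ := rfl
        _ = Δ ^ 2 := by rw [h2]
    have hRexp : R ^ 2 = (1 + μ Set.univ) * c ^ 2 * Δ ^ 2 := by
      rw [hR, mul_pow, mul_pow]
      congr 1
      congr 1
      rw [← ENNReal.rpow_natCast ((1 + μ Set.univ) ^ (1 / 2 : ℝ)) 2, ← ENNReal.rpow_mul]
      norm_num
    rw [hRexp]
    calc c ^ 2 * μ0 + c ^ 2 * D ^ 2 * μ Set.univ
        ≤ (1 + μ Set.univ) * (c ^ 2 * μ0) + (1 + μ Set.univ) * (c ^ 2 * D ^ 2) := by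
          refine add_le_add ?_ ?_
          · exact le_mul_of_one_le_left zero_le le_self_add
          · calc c ^ 2 * D ^ 2 * μ Set.univ = μ Set.univ * (c ^ 2 * D ^ 2) := by ring
              _ ≤ (1 + μ Set.univ) * (c ^ 2 * D ^ 2) := mul_le_mul' le_add_self le_rfl
      _ = (1 + μ Set.univ) * c ^ 2 * (μ0 + D ^ 2) := by ring
      _ ≤ (1 + μ Set.univ) * c ^ 2 * Δ ^ 2 := mul_le_mul' le_rfl hΔsq
  have hfinal : (∫⁻ x, ENNReal.ofReal ((g x - Pg x) ^ 2) ∂μ) ≤ R ^ 2 := hint.trans hRsq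
  have := ENNReal.rpow_le_rpow hfinal (by norm_num : (0:ℝ) ≤ 1 / 2)
  calc (∫⁻ x, ENNReal.ofReal ((g x - Pg x) ^ 2) ∂μ) ^ (1 / 2 : ℝ)
      ≤ (R ^ 2) ^ (1 / 2 : ℝ) := this
    _ = R := by
        rw [← ENNReal.rpow_natCast R 2, ← ENNReal.rpow_mul]
        norm_num
    _ = _ := by rw [hR]
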